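/- arXiv:1905.11609 — 4 statements merged into one kernel-verified Lean document; each statement's English description precedes it below -/
import Mathlib

section
/- Let δ₀, K > 0, set K₁ = 3K/(2δ₀), and define ψ(x) = cosh(K₁) − cosh(K₁(2x−1)). Let a, b : ℝ → ℝ with a differentiable, and suppose that for all x ∈ [0,1] one has a(x) ≥ δ₀, |a'(x)| ≤ K and |b(x)| ≤ K. Then for every x ∈ [0,1], a(x)·ψ''(x) + (2a'(x) − b(x))·ψ'(x) ≤ 0. -/
/-!
Writing `u = K₁ (2x - 1)`, one has `ψ' = -2K₁ sinh u` and `ψ'' = -4K₁² cosh u`. Since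
`|sinh u| ≤ cosh u` and `|2a' - b| ≤ 3K = 2δ₀K₁`, the drift term is at most `4δ₀K₁² cosh u`,
which the diffusion term `a ψ'' ≤ -4δ₀K₁² cosh u` absorbs; `K₁` is chosen exactly so that the two
balance.
-/

open Real

lemma abs_sinh_le_cosh (u : ℝ) : |sinh u| ≤ cosh u := by
  rw [abs_sinh, ← cosh_abs u]
  exact (sinh_lt_cosh _).le

section Weight

variable (k C : ℝ)

lemma hasDerivAt_mul_two_mul_sub_one (x : ℝ) :
    HasDerivAt (fun x : ℝ => k * (2 * x - 1)) (2 * k) x := by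
  simpa [mul_comm] using (((hasDerivAt_id x).const_mul 2).sub_const 1).const_mul k

lemma deriv_cosh_sub_cosh_affine :
    deriv (fun x : ℝ => C - cosh (k * (2 * x - 1))) =
      fun x => -(2 * k * sinh (k * (2 * x - 1))) := by
  funext x
  exact (((hasDerivAt_mul_two_mul_sub_one k x).cosh).const_sub C).deriv.trans (by ring)

lemma deriv_deriv_cosh_sub_cosh_affine (x : ℝ) :
    deriv (deriv (fun x : ℝ => C - cosh (k * (2 * x - 1)))) x =
      -(4 * k ^ 2 * cosh (k * (2 * x - 1))) := by
  rw [deriv_cosh_sub_cosh_affine]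
  exact ((((hasDerivAt_mul_two_mul_sub_one k x).sinh).const_mul (2 * k)).neg).deriv.trans (by ring)

end Weight

lemma mul_neg_cosh_add_mul_neg_sinh_nonpos {δ a c k : ℝ} (hδ : 0 < δ) (hδa : δ ≤ a)
    (hc : |c| ≤ 2 * δ * k) (u : ℝ) :
    a * -(4 * k ^ 2 * cosh u) + c * -(2 * k * sinh u) ≤ 0 := by
  have hk : 0 ≤ k := nonneg_of_mul_nonneg_right ((abs_nonneg c).trans hc) (by positivity)
  have drift : c * -(2 * k * sinh u) ≤ 4 * δ * k ^ 2 * cosh u :=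
    calc c * -(2 * k * sinh u) ≤ |c * -(2 * k * sinh u)| := le_abs_self _
      _ = |c| * (2 * k * |sinh u|) := by
          rw [abs_mul, abs_neg, abs_mul, abs_mul, abs_two, abs_of_nonneg hk]
      _ ≤ 2 * δ * k * (2 * k * cosh u) := by
          gcongr
          exact abs_sinh_le_cosh u
      _ = 4 * δ * k ^ 2 * cosh u := by ring
  have diffusion : δ * k ^ 2 * cosh u ≤ a * k ^ 2 * cosh u := by gcongr
  linarith

theorem stmt_0_general (δ₀ K : ℝ) (hδ : 0 < δ₀)
    (K₁ : ℝ) (hK₁ : K₁ = 3 * K / (2 * δ₀))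
    (ψ : ℝ → ℝ) (hψ : ψ = fun x : ℝ => Real.cosh K₁ - Real.cosh (K₁ * (2 * x - 1)))
    (a b : ℝ → ℝ)
    (haδ : ∀ x ∈ Set.Icc (0:ℝ) 1, δ₀ ≤ a x)
    (ha' : ∀ x ∈ Set.Icc (0:ℝ) 1, |deriv a x| ≤ K)
    (hb : ∀ x ∈ Set.Icc (0:ℝ) 1, |b x| ≤ K) :
    ∀ x ∈ Set.Icc (0:ℝ) 1,
      a x * deriv (deriv ψ) x + (2 * deriv a x - b x) * deriv ψ x ≤ 0 := by
  intro x hx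
  rw [hψ, deriv_deriv_cosh_sub_cosh_affine, deriv_cosh_sub_cosh_affine]
  refine mul_neg_cosh_add_mul_neg_sinh_nonpos hδ (haδ x hx) ?_ _
  have hK₁δ : 2 * δ₀ * K₁ = 3 * K := by rw [hK₁]; field_simp
  calc |2 * deriv a x - b x| ≤ |2 * deriv a x| + |b x| := abs_sub _ _
    _ = 2 * |deriv a x| + |b x| := by rw [abs_mul, abs_two]
    _ ≤ 2 * δ₀ * K₁ := by linarith [ha' x hx, hb x hx]

/-- Lemma 5.2 (weight lemma), differential inequality: with `K₁ = 3K/(2δ₀)` and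
`ψ x = cosh K₁ − cosh (K₁ (2x−1))`, if `a ≥ δ₀`, `|a'| ≤ K`, `|b| ≤ K` on `[0,1]`, then
`a ψ'' + (2a' − b) ψ' ≤ 0` on `[0,1]`. -/
theorem stmt_0 (δ₀ K : ℝ) (hδ : 0 < δ₀) (hK : 0 < K)
    (K₁ : ℝ) (hK₁ : K₁ = 3 * K / (2 * δ₀))
    (ψ : ℝ → ℝ) (hψ : ψ = fun x : ℝ => Real.cosh K₁ - Real.cosh (K₁ * (2 * x - 1)))
    (a b : ℝ → ℝ) (ha : Differentiable ℝ a)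
    (haδ : ∀ x ∈ Set.Icc (0:ℝ) 1, δ₀ ≤ a x)
    (ha' : ∀ x ∈ Set.Icc (0:ℝ) 1, |deriv a x| ≤ K)
    (hb : ∀ x ∈ Set.Icc (0:ℝ) 1, |b x| ≤ K) :
    ∀ x ∈ Set.Icc (0:ℝ) 1,
      a x * deriv (deriv ψ) x + (2 * deriv a x - b x) * deriv ψ x ≤ 0 :=
  stmt_0_general δ₀ K hδ K₁ hK₁ ψ hψ a b haδ ha' hb
end

section
/- Let κ ∈ (0, 1/2) and let R_κ(x) = |x|^{−(1−2κ)/2} ∫₀^∞ t^{−(5−2κ)/4} e^{−t x² − 1/(4t)} dt for x ≠ 0. If 0 < q < 2/(1 − 2κ), then ∫_ℝ R_κ(x)^q dx < ∞. -/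
/-!
By AM–GM, `t x² + 1/(4t) ≥ |x|/2 + 1/(8t)`, so the `t`-integral in `R_κ(x)` is at most
`C e^{-|x|/2}` with `C = ∫₀^∞ t^{-(5-2κ)/4} e^{-1/(8t)} dt`, which is finite because the exponent is
below `-1` (the substitution `t ↦ 1/t` turns it into a Gamma integral). Hence
`R_κ(x)^q ≤ C^q |x|^{-(1-2κ)q/2} e^{-q|x|/2}`, and this is integrable since `(1-2κ)q/2 < 1`.
-/

open MeasureTheory Set Real

theorem integrable_comp_abs_of_integrableOn_Ioi {E : Type*} [NormedAddCommGroup E] {f : ℝ → E}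
    (hf : IntegrableOn f (Ioi 0)) : Integrable fun x => f |x| := by
  have h_Ioi : IntegrableOn (fun x => f |x|) (Ioi 0) :=
    hf.congr_fun (fun x hx => by rw [abs_of_pos hx]) measurableSet_Ioi
  have h_Iic : IntegrableOn (fun x => f |x|) (Iic 0) := by
    have m : MeasurableEmbedding fun x : ℝ => -x := (Homeomorph.neg ℝ).measurableEmbedding
    rw [← Measure.map_neg_eq_self (volume : Measure ℝ), m.integrableOn_map_iff]
    simp_rw [Function.comp_def, abs_neg, neg_preimage, neg_Iic, neg_zero]
    exact (integrableOn_Ici_iff_integrableOn_Ioi (by finiteness)).2 h_Ioi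
  rw [← integrableOn_univ, ← Iic_union_Ioi (a := (0 : ℝ))]
  exact h_Iic.union h_Ioi

theorem integrableOn_rpow_mul_exp_neg_div {a c : ℝ} (ha : a < -1) (hc : 0 < c) :
    IntegrableOn (fun t : ℝ => t ^ a * exp (-c / t)) (Ioi 0) := by
  have hf : IntegrableOn (fun s : ℝ => s ^ (-a - 2) * exp (-c * s ^ (1 : ℝ))) (Ioi 0) :=
    integrableOn_rpow_mul_exp_neg_mul_rpow (by linarith) one_pos hc
  refine ((integrableOn_Ioi_comp_rpow_iff' _ (by norm_num : (-1 : ℝ) ≠ 0)).mpr hf).congr_fun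
    (fun t (ht : 0 < t) => ?_) measurableSet_Ioi
  simp only [smul_eq_mul]
  rw [rpow_one, ← rpow_mul ht.le, ← mul_assoc, ← rpow_add ht, rpow_neg_one]
  ring_nf

theorem exp_neg_mul_sq_sub_inv_le (x : ℝ) {t : ℝ} (ht : 0 < t) :
    exp (-t * x ^ 2 - 1 / (4 * t)) ≤ exp (-(1 / 2) * |x|) * exp (-(1 / 8) / t) := by
  rw [← exp_add, exp_le_exp]
  -- `t x² + 1/(16 t) - |x|/2 = (t |x| - 1/4)² / t`
  have h : 0 ≤ (t * |x| - 1 / 4) ^ 2 / t := by positivity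
  have hx : |x| ^ 2 = x ^ 2 := sq_abs x
  field_simp at h ⊢
  nlinarith

/-- Up to a power of `|x|`, this is the Macdonald function `K_{a+1}(|x|)`. -/
noncomputable def besselKIntegral (a x : ℝ) : ℝ :=
  ∫ t in Ioi 0, t ^ a * exp (-t * x ^ 2 - 1 / (4 * t))

theorem besselKIntegral_nonneg (a x : ℝ) : 0 ≤ besselKIntegral a x :=
  setIntegral_nonneg measurableSet_Ioi fun t (ht : 0 < t) => by positivity

theorem measurable_besselKIntegral (a : ℝ) : Measurable (besselKIntegral a) := by
  have h : Measurable fun p : ℝ × ℝ => p.2 ^ a * exp (-p.2 * p.1 ^ 2 - 1 / (4 * p.2)) := by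
    fun_prop
  exact h.stronglyMeasurable.integral_prod_right'.measurable

theorem besselKIntegral_le {a : ℝ} (ha : a < -1) (x : ℝ) :
    besselKIntegral a x ≤
      exp (-(1 / 2) * |x|) * ∫ t in Ioi 0, t ^ a * exp (-(1 / 8) / t) := by
  rw [besselKIntegral, ← integral_const_mul]
  refine integral_mono_of_nonneg ?_
    ((integrableOn_rpow_mul_exp_neg_div ha (by norm_num)).const_mul _) ?_ <;>
    filter_upwards [ae_restrict_mem measurableSet_Ioi] with t (ht : 0 < t)
  · positivity
  · calc t ^ a * exp (-t * x ^ 2 - 1 / (4 * t))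
        ≤ t ^ a * (exp (-(1 / 2) * |x|) * exp (-(1 / 8) / t)) := by
          gcongr; exact exp_neg_mul_sq_sub_inv_le x ht
      _ = _ := by ring

theorem integrable_rpow_abs_rpow_mul_besselKIntegral {a b q : ℝ} (ha : a < -1) (hbq : -1 < b * q)
    (hq : 0 < q) : Integrable fun x => (|x| ^ b * besselKIntegral a x) ^ q := by
  set C := ∫ t in Ioi 0, t ^ a * exp (-(1 / 8) / t)
  have hC : 0 ≤ C := setIntegral_nonneg measurableSet_Ioi fun t (ht : 0 < t) => by positivity
  have hdom : ∀ x : ℝ, ‖(|x| ^ b * besselKIntegral a x) ^ q‖ ≤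
      C ^ q * (|x| ^ (b * q) * exp (-(q / 2) * |x|)) := fun x => by
    have hK := besselKIntegral_nonneg a x
    rw [norm_of_nonneg (rpow_nonneg (mul_nonneg (by positivity) hK) q)]
    calc (|x| ^ b * besselKIntegral a x) ^ q
        ≤ (|x| ^ b * (exp (-(1 / 2) * |x|) * C)) ^ q := by
          gcongr; exact besselKIntegral_le ha x
      _ = C ^ q * (|x| ^ (b * q) * exp (-(q / 2) * |x|)) := by
          rw [mul_rpow (by positivity) (by positivity), mul_rpow (by positivity) hC,
            ← rpow_mul (abs_nonneg x), ← exp_mul]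
          ring_nf
  have hbound : Integrable fun x : ℝ => |x| ^ (b * q) * exp (-(q / 2) * |x|) :=
    integrable_comp_abs_of_integrableOn_Ioi (f := fun x => x ^ (b * q) * exp (-(q / 2) * x)) <| by
      simpa only [rpow_one] using
        integrableOn_rpow_mul_exp_neg_mul_rpow (p := 1) hbq one_pos (half_pos hq)
  have hmeas : Measurable fun x : ℝ => (|x| ^ b * besselKIntegral a x) ^ q := by
    have := measurable_besselKIntegral a
    fun_prop
  exact (hbound.const_mul _).mono' hmeas.aestronglyMeasurable (ae_of_all _ hdom)

/-- Integrability of powers of the kernel `R_κ` : if `0 < q < 2/(1−2κ)`, then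
`∫_ℝ R_κ(x)^q dx < ∞`. -/
theorem stmt_6 (κ : ℝ) (hκ : κ ∈ Set.Ioo (0:ℝ) (1/2))
    (R : ℝ → ℝ)
    (hR : ∀ x : ℝ, x ≠ 0 → R x = |x| ^ (-(1 - 2*κ)/2) *
      ∫ t in Set.Ioi (0:ℝ), t ^ (-(5 - 2*κ)/4) * Real.exp (-t*x^2 - 1/(4*t)))
    (q : ℝ) (hq0 : 0 < q) (hq : q < 2 / (1 - 2*κ)) :
    Integrable (fun x : ℝ => R x ^ q) := by
  obtain ⟨-, hκ1⟩ := hκ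
  have hq' : (1 - 2 * κ) * q < 2 := by
    rwa [lt_div_iff₀ (by linarith), mul_comm] at hq
  refine (integrable_rpow_abs_rpow_mul_besselKIntegral (a := -(5 - 2 * κ) / 4)
    (b := -(1 - 2 * κ) / 2) (by linarith) (by linarith) hq0).congr ?_
  filter_upwards [Measure.ae_ne volume 0] with x hx
  rw [hR x hx, besselKIntegral]
end

section
/- Let κ ∈ (0, 1/2) and let R_κ(x) = |x|^{−(1−2κ)/2} ∫₀^∞ t^{−(5−2κ)/4} e^{−t x² − 1/(4t)} dt for x ≠ 0. If q ≥ 2/(1 − 2κ), then ∫_ℝ R_κ(x)^q dx = ∞. -/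
open MeasureTheory Set

/-- Non-integrability of powers of the kernel `R_κ` : if `q ≥ 2/(1−2κ)`, then
`∫_ℝ R_κ(x)^q dx = ∞`. -/
theorem stmt_7 (κ : ℝ) (hκ : κ ∈ Set.Ioo (0:ℝ) (1/2))
    (R : ℝ → ℝ)
    (hR : ∀ x : ℝ, x ≠ 0 → R x = |x| ^ (-(1 - 2*κ)/2) *
      ∫ t in Set.Ioi (0:ℝ), t ^ (-(5 - 2*κ)/4) * Real.exp (-t*x^2 - 1/(4*t)))
    (q : ℝ) (hq : 2 / (1 - 2*κ) ≤ q) :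
    (∫⁻ x : ℝ, ENNReal.ofReal (R x ^ q)) = ⊤ := by
  obtain ⟨hκ0, hκ2⟩ := hκ
  set α : ℝ := (1 - 2*κ)/2 with hα
  set β : ℝ := -(5 - 2*κ)/4 with hβ
  have hα0 : 0 < α := by rw [hα]; linarith
  have hαq : 1 ≤ α * q := by
    have h2 : (2:ℝ)/(1-2*κ) = 1/α := by rw [hα]; field_simp
    rw [h2] at hq
    calc (1:ℝ) = α * (1/α) := by field_simp
    _ ≤ α * q := by nlinarith
  have hq0 : 0 < q := by nlinarith
  have hβlt : β < -1 := by rw [hβ]; linarith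
  have hβgt : -2 < β := by rw [hβ]; linarith
  set c : ℝ := (1/4) * Real.exp (-3) with hc
  have hc0 : 0 < c := by positivity
  have hmeas : ∀ x : ℝ, Measurable (fun t : ℝ => t ^ β * Real.exp (-t*x^2 - 1/(4*t))) := by
    intro x; fun_prop
  -- nonnegativity of the integrand
  have hnn : ∀ x t : ℝ, 0 ≤ t → 0 ≤ t ^ β * Real.exp (-t*x^2 - 1/(4*t)) := by
    intro x t ht
    positivity
  -- integrability on (0,1]
  have hint1 : ∀ x : ℝ, IntegrableOn (fun t : ℝ => t ^ β * Real.exp (-t*x^2 - 1/(4*t)))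
      (Ioc (0:ℝ) 1) := by
    intro x
    apply Measure.integrableOn_of_bounded (M := 64) (by simp) (hmeas x).aestronglyMeasurable
    filter_upwards [ae_restrict_mem measurableSet_Ioc] with t ht
    obtain ⟨ht0, ht1⟩ := ht
    have hexp2 : Real.exp (-(1/(4*t))) ≤ 64 * t^2 := by
      have h1 : (1/(8*t))^2 ≤ Real.exp (1/(4*t)) := by
        have := Real.add_one_le_exp (1/(8*t))
        calc (1/(8*t))^2 ≤ (1/(8*t) + 1)^2 := by nlinarith [le_of_lt (by positivity : (0:ℝ) < 1/(8*t))]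
        _ = (1/(8*t)+1) * (1/(8*t)+1) := sq (1/(8*t)+1) ▸ by ring
        _ ≤ Real.exp (1/(8*t)) * Real.exp (1/(8*t)) := by
            apply mul_le_mul this this (by positivity) (Real.exp_nonneg _)
        _ = Real.exp (1/(4*t)) := by rw [← Real.exp_add]; ring_nf
      rw [Real.exp_neg]
      rw [inv_le_comm₀ (Real.exp_pos _) (by positivity)] -- maybe wrong name
      calc (64 * t^2)⁻¹ = (1/(8*t))^2 := by field_simp; ring
      _ ≤ Real.exp (1/(4*t)) := h1
    have hb : t ^ β * Real.exp (-t*x^2 - 1/(4*t)) ≤ 64 * t ^ (β + 2) := by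
      have h1 : Real.exp (-t*x^2 - 1/(4*t)) ≤ 64 * t^2 := by
        calc Real.exp (-t*x^2 - 1/(4*t)) ≤ Real.exp (-(1/(4*t))) := by
              apply Real.exp_le_exp.2; nlinarith [sq_nonneg x]
        _ ≤ 64 * t^2 := hexp2
      calc t ^ β * Real.exp (-t*x^2 - 1/(4*t)) ≤ t ^ β * (64 * t^2) := by
            apply mul_le_mul_of_nonneg_left h1 (Real.rpow_nonneg ht0.le _)
      _ = 64 * t ^ (β + 2) := by
            rw [Real.rpow_add ht0, Real.rpow_two]; ring
    rw [Real.norm_eq_abs, abs_of_nonneg (hnn x t ht0.le)]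
    refine hb.trans ?_
    have : t ^ (β + 2) ≤ 1 := by
      apply Real.rpow_le_one ht0.le ht1; linarith
    nlinarith
  -- integrability on (1,∞) for x ≠ 0
  have hint2 : ∀ x : ℝ, x ≠ 0 → IntegrableOn (fun t : ℝ => t ^ β * Real.exp (-t*x^2 - 1/(4*t)))
      (Ioi (1:ℝ)) := by
    intro x hx
    have hx2 : 0 < x^2 := by positivity
    apply Integrable.mono (exp_neg_integrableOn_Ioi 1 hx2) (hmeas x).aestronglyMeasurable
    filter_upwards [ae_restrict_mem measurableSet_Ioi] with t ht
    have ht0 : (0:ℝ) < t := lt_trans zero_lt_one ht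
    rw [Real.norm_eq_abs, abs_of_nonneg (hnn x t ht0.le), Real.norm_eq_abs,
      abs_of_nonneg (Real.exp_nonneg _)]
    calc t ^ β * Real.exp (-t*x^2 - 1/(4*t)) ≤ 1 * Real.exp (-t*x^2 - 1/(4*t)) := by
          apply mul_le_mul_of_nonneg_right _ (Real.exp_nonneg _)
          apply Real.rpow_le_one_of_one_le_of_nonpos (le_of_lt ht) (by linarith)
    _ ≤ Real.exp (-x^2 * t) := by
          rw [one_mul]; apply Real.exp_le_exp.2; nlinarith [le_of_lt (by positivity : (0:ℝ) < 1/(4*t))]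
  have hint : ∀ x : ℝ, x ≠ 0 → IntegrableOn (fun t : ℝ => t ^ β * Real.exp (-t*x^2 - 1/(4*t)))
      (Ioi (0:ℝ)) := by
    intro x hx
    have : (Ioi (0:ℝ)) = Ioc 0 1 ∪ Ioi 1 := (Ioc_union_Ioi_eq_Ioi zero_le_one).symm
    rw [this]
    exact (hint1 x).union (hint2 x hx)
  -- lower bound for the inner integral when 0 < x < 1
  have hinner : ∀ x ∈ Ioo (0:ℝ) 1, c ≤ ∫ t in Set.Ioi (0:ℝ),
      t ^ β * Real.exp (-t*x^2 - 1/(4*t)) := by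
    intro x hx
    have hx0 : x ≠ 0 := ne_of_gt hx.1
    have hsub : Ioc (1:ℝ) 2 ⊆ Ioi (0:ℝ) := fun t ht => lt_trans zero_lt_one ht.1
    have hptwise : ∀ t ∈ Ioc (1:ℝ) 2, c ≤ t ^ β * Real.exp (-t*x^2 - 1/(4*t)) := by
      intro t ht
      obtain ⟨ht1, ht2⟩ := ht
      have ht0 : (0:ℝ) < t := lt_trans zero_lt_one ht1
      have h1 : (1/4 : ℝ) ≤ t ^ β := by
        calc (1/4 : ℝ) = 2 ^ (-2 : ℝ) := by
              rw [Real.rpow_neg (by norm_num), Real.rpow_two]; norm_num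
        _ ≤ 2 ^ β := by
              apply Real.rpow_le_rpow_left_iff (x := 2) (by norm_num) |>.2 (le_of_lt hβgt)
        _ ≤ t ^ β := Real.rpow_le_rpow_of_nonpos ht0 ht2 (by linarith)
      have h2 : Real.exp (-3) ≤ Real.exp (-t*x^2 - 1/(4*t)) := by
        apply Real.exp_le_exp.2
        have hx1 : x^2 ≤ 1 := by nlinarith [hx.1, hx.2]
        have h4 : 1/(4*t) ≤ 1 := by rw [div_le_one (by linarith)]; linarith
        nlinarith
      calc c = (1/4) * Real.exp (-3) := hc
      _ ≤ t ^ β * Real.exp (-t*x^2 - 1/(4*t)) := by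
          apply mul_le_mul h1 h2 (Real.exp_nonneg _) (le_trans (by norm_num) h1)
    have step1 : c ≤ ∫ t in Set.Ioc (1:ℝ) 2, t ^ β * Real.exp (-t*x^2 - 1/(4*t)) := by
      have := setIntegral_ge_of_const_le (μ := volume) (c := c)
        (f := fun t : ℝ => t ^ β * Real.exp (-t*x^2 - 1/(4*t)))
        measurableSet_Ioc (by simp) hptwise ((hint x hx0).mono_set hsub)
      have h21 : ((2:ℝ) - 1) = 1 := by norm_num
      simpa [h21] using this
    refine step1.trans ?_
    apply setIntegral_mono_set (hint x hx0)
    · filter_upwards [ae_restrict_mem measurableSet_Ioi] with t ht using hnn x t ht.le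
    · exact Filter.Eventually.of_forall hsub
  -- divergence of the comparison integral
  have hT : ∫⁻ x in Ioo (0:ℝ) 1, ENNReal.ofReal (x ^ (-(α*q))) = ⊤ := by
    by_contra hT
    have hmes : Measurable (fun x : ℝ => x ^ (-(α*q))) := by fun_prop
    have hpos : 0 ≤ᵐ[volume.restrict (Ioo (0:ℝ) 1)] fun x : ℝ => x ^ (-(α*q)) := by
      filter_upwards [ae_restrict_mem measurableSet_Ioo] with x hx
      exact Real.rpow_nonneg hx.1.le _
    have hintOn : IntegrableOn (fun x : ℝ => x ^ (-(α*q))) (Ioo (0:ℝ) 1) := by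
      refine ⟨hmes.aestronglyMeasurable, ?_⟩
      rw [hasFiniteIntegral_iff_ofReal hpos]
      exact lt_top_iff_ne_top.2 hT
    rw [intervalIntegral.integrableOn_Ioo_rpow_iff zero_lt_one] at hintOn
    linarith
  -- pointwise lower bound for R on (0,1)
  have hlow : ∀ x ∈ Ioo (0:ℝ) 1,
      ENNReal.ofReal (c ^ q * x ^ (-(α*q))) ≤ ENNReal.ofReal (R x ^ q) := by
    intro x hx
    have hx0 : (0:ℝ) < x := hx.1
    apply ENNReal.ofReal_le_ofReal
    have hRx : x ^ (-α) * c ≤ R x := by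
      rw [hR x (ne_of_gt hx0)]
      have habs : |x| = x := abs_of_pos hx0
      have hexp : -(1 - 2*κ)/2 = -α := by rw [hα]; ring
      rw [habs, hexp]
      exact mul_le_mul_of_nonneg_left (hinner x hx) (Real.rpow_nonneg hx0.le _)
    have h1 : (x ^ (-α) * c) ^ q ≤ R x ^ q :=
      Real.rpow_le_rpow (by positivity) hRx hq0.le
    calc c ^ q * x ^ (-(α*q)) = (x ^ (-α) * c) ^ q := by
          rw [Real.mul_rpow (Real.rpow_nonneg hx0.le _) hc0.le,
            ← Real.rpow_mul hx0.le, neg_mul, mul_comm]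
    _ ≤ R x ^ q := h1
  refine top_le_iff.1 ?_
  have hcq : (0:ℝ) ≤ c ^ q := by positivity
  calc (⊤:ENNReal) = ENNReal.ofReal (c^q) * ∫⁻ x in Ioo (0:ℝ) 1, ENNReal.ofReal (x ^ (-(α*q))) := by
        rw [hT, ENNReal.mul_top]
        exact (ENNReal.ofReal_pos.2 (by positivity)).ne'
  _ = ∫⁻ x in Ioo (0:ℝ) 1, ENNReal.ofReal (c^q) * ENNReal.ofReal (x ^ (-(α*q))) :=
        (lintegral_const_mul' _ _ ENNReal.ofReal_ne_top).symm
  _ = ∫⁻ x in Ioo (0:ℝ) 1, ENNReal.ofReal (c^q * x ^ (-(α*q))) := by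
        refine lintegral_congr_ae ?_
        filter_upwards [ae_restrict_mem measurableSet_Ioo] with x hx
        rw [← ENNReal.ofReal_mul hcq]
  _ ≤ ∫⁻ x in Ioo (0:ℝ) 1, ENNReal.ofReal (R x ^ q) := setLIntegral_mono' measurableSet_Ioo hlow
  _ ≤ ∫⁻ x, ENNReal.ofReal (R x ^ q) := setLIntegral_le_lintegral _ _
end

section
/- Let ψ : (0,1) → (0,∞) be differentiable with nonincreasing derivative ψ' (i.e., ψ is concave), and let g : (0,∞) → [0,∞] be measurable. Then ∫₀¹ g(ψ(x)) |ψ'(x)| dx ≤ 2 ∫₀^∞ g(y) dy. -/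
/-!
On `(0, 1)` split off the set where `ψ' > 0` and the set where `ψ' < 0`; the integrand vanishes
elsewhere. Since `ψ'` is antitone, both sets are intervals, and on each of them `ψ` is injective
because its derivative does not vanish. The one-dimensional change of variables `y = ψ x` bounds
the integral over each piece by `∫_{ψ(piece)} g ≤ ∫_{(0,∞)} g`.
-/

open MeasureTheory Set

theorem Set.OrdConnected.inter_preimage_of_antitoneOn {α β : Type*} [Preorder α] [Preorder β]
    {t : Set β} {s : Set α} {f : β → α} (ht : t.OrdConnected) (hs : s.OrdConnected)
    (hf : AntitoneOn f t) : (t ∩ f ⁻¹' s).OrdConnected := by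
  obtain ⟨u, hu, heq⟩ := hs.preimage_antitoneOn hf
  exact heq ▸ ht.inter hu

theorem Set.OrdConnected.injOn_of_hasDerivAt_ne_zero {s : Set ℝ} {f f' : ℝ → ℝ}
    (hs : s.OrdConnected) (hf : ∀ x ∈ s, HasDerivAt f (f' x) x) (hf' : ∀ x ∈ s, f' x ≠ 0) :
    s.InjOn f := by
  have hne : ∀ x ∈ s, ∀ y ∈ s, x < y → f x ≠ f y := by
    intro x hx y hy hxy hfxy
    have hIcc : Icc x y ⊆ s := hs.out hx hy
    obtain ⟨c, hc, hslope⟩ := exists_hasDerivAt_eq_slope f f' hxy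
      (fun z hz => (hf z (hIcc hz)).continuousAt.continuousWithinAt)
      (fun z hz => hf z (hIcc (Ioo_subset_Icc_self hz)))
    exact hf' c (hIcc (Ioo_subset_Icc_self hc)) (by rw [hslope, hfxy, sub_self, zero_div])
  intro x hx y hy hfxy
  by_contra hxy
  rcases lt_or_gt_of_ne hxy with h | h
  · exact hne x hx y hy h hfxy
  · exact hne y hy x hx h hfxy.symm

theorem Set.OrdConnected.setLIntegral_comp_mul_abs_deriv_le {s t : Set ℝ} {f f' : ℝ → ℝ}
    (hs : s.OrdConnected) (hf : ∀ x ∈ s, HasDerivAt f (f' x) x) (hf' : ∀ x ∈ s, f' x ≠ 0)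
    (hst : MapsTo f s t) (g : ℝ → ENNReal) :
    ∫⁻ x in s, g (f x) * ENNReal.ofReal |f' x| ≤ ∫⁻ y in t, g y :=
  calc ∫⁻ x in s, g (f x) * ENNReal.ofReal |f' x|
      = ∫⁻ y in f '' s, g y := by
        simp_rw [mul_comm (g _)]
        exact (lintegral_image_eq_lintegral_abs_deriv_mul hs.measurableSet
          (fun x hx => (hf x hx).hasDerivWithinAt) (hs.injOn_of_hasDerivAt_ne_zero hf hf') g).symm
    _ ≤ ∫⁻ y in t, g y := lintegral_mono_set hst.image_subset

theorem stmt_19_general (ψ ψ' : ℝ → ℝ)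
    (hψpos : ∀ x ∈ Set.Ioo (0:ℝ) 1, 0 < ψ x)
    (hderiv : ∀ x ∈ Set.Ioo (0:ℝ) 1, HasDerivAt ψ (ψ' x) x)
    (hmono : ∀ x ∈ Set.Ioo (0:ℝ) 1, ∀ y ∈ Set.Ioo (0:ℝ) 1, x ≤ y → ψ' y ≤ ψ' x)
    (g : ℝ → ENNReal) :
    (∫⁻ x in Set.Ioo (0:ℝ) 1, g (ψ x) * ENNReal.ofReal |ψ' x|)
      ≤ 2 * ∫⁻ y in Set.Ioi (0:ℝ), g y := by
  set F : ℝ → ENNReal := fun x => g (ψ x) * ENNReal.ofReal |ψ' x|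
  set A := Ioo (0:ℝ) 1 ∩ ψ' ⁻¹' Ioi 0
  set B := Ioo (0:ℝ) 1 ∩ ψ' ⁻¹' Iio 0
  have hA : A.OrdConnected := ordConnected_Ioo.inter_preimage_of_antitoneOn ordConnected_Ioi hmono
  have hB : B.OrdConnected := ordConnected_Ioo.inter_preimage_of_antitoneOn ordConnected_Iio hmono
  have hpiece : ∀ s ⊆ Ioo (0:ℝ) 1, s.OrdConnected → (∀ x ∈ s, ψ' x ≠ 0) →
      ∫⁻ x in s, F x ≤ ∫⁻ y in Ioi (0:ℝ), g y := fun s hsI hs hne =>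
    hs.setLIntegral_comp_mul_abs_deriv_le (fun x hx => hderiv x (hsI hx)) hne
      (fun x hx => hψpos x (hsI hx)) g
  have hF : EqOn F ((A ∪ B).indicator F) (Ioo 0 1) := by
    intro x hx
    by_cases hAB : x ∈ A ∪ B
    · rw [indicator_of_mem hAB]
    · have hψ' : ψ' x = 0 := le_antisymm (not_lt.1 fun h => hAB (Or.inl ⟨hx, h⟩))
        (not_lt.1 fun h => hAB (Or.inr ⟨hx, h⟩))
      simp [F, indicator_of_notMem hAB, hψ']
  calc ∫⁻ x in Ioo (0:ℝ) 1, F x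
      = ∫⁻ x in Ioo (0:ℝ) 1, (A ∪ B).indicator F x := setLIntegral_congr_fun measurableSet_Ioo hF
    _ ≤ ∫⁻ x in A ∪ B, F x := by
        rw [← lintegral_indicator (hA.measurableSet.union hB.measurableSet)]
        exact setLIntegral_le_lintegral _ _
    _ ≤ (∫⁻ x in A, F x) + ∫⁻ x in B, F x := lintegral_union_le _ _ _
    _ ≤ (∫⁻ y in Ioi (0:ℝ), g y) + ∫⁻ y in Ioi (0:ℝ), g y :=
        add_le_add (hpiece A inter_subset_left hA fun x hx => hx.2.ne')
          (hpiece B inter_subset_left hB fun x hx => hx.2.ne)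
    _ = 2 * ∫⁻ y in Ioi (0:ℝ), g y := (two_mul _).symm

/-- Change-of-variables estimate from the proof of Lemma 5.3: if `ψ` is positive and
concave (derivative `ψ'` nonincreasing) on `(0,1)` and `g : (0,∞) → [0,∞]` is measurable,
then `∫₀¹ g(ψ(x)) |ψ'(x)| dx ≤ 2 ∫₀^∞ g(y) dy`. -/
theorem stmt_19 (ψ ψ' : ℝ → ℝ)
    (hψpos : ∀ x ∈ Set.Ioo (0:ℝ) 1, 0 < ψ x)
    (hderiv : ∀ x ∈ Set.Ioo (0:ℝ) 1, HasDerivAt ψ (ψ' x) x)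
    (hmono : ∀ x ∈ Set.Ioo (0:ℝ) 1, ∀ y ∈ Set.Ioo (0:ℝ) 1, x ≤ y → ψ' y ≤ ψ' x)
    (g : ℝ → ENNReal) (hg : Measurable g) :
    (∫⁻ x in Set.Ioo (0:ℝ) 1, g (ψ x) * ENNReal.ofReal |ψ' x|)
      ≤ 2 * ∫⁻ y in Set.Ioi (0:ℝ), g y :=
  stmt_19_general ψ ψ' hψpos hderiv hmono g
end
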